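/- (Recursion for 𝒜) For every N ≥ 1 and every u ∈ ℂ, the monodromy-matrix entry on the length-(N+1) chain satisfies 𝒜^(N+1)(u) = a(u)² E⁺₊ ⊗ 𝒜^(N)(u) + b(u)² E⁻₋ ⊗ 𝒜^(N)(u) + a(u)c(u) E⁻₊ ⊗ ℬ^(N)(u) + a(u)c(u) E⁺₋ ⊗ 𝒞^(N)(u) + c(u)² E⁻₋ ⊗ 𝒟^(N)(u), where E^ε_{ε′} acts on the new site N+1 and the size-N operators act on sites N,…,1. -/

import Mathlib

noncomputable section
open Complex Matrix

/-- Spin configurations of a chain of `N` sites: `true` encodes `v₊`, `false` encodes `v₋`.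
The site with label `i ∈ {1,…,N}` corresponds to the index `i-1 : Fin N`
(so the leftmost site `N` is the index `N-1`). -/
abbrev Conf (N : ℕ) := Fin N → Bool

/-- The combinatorial-point parameter `η = 2πi/3`. -/
def ηc : ℂ := 2 * (Real.pi : ℂ) * Complex.I / 3

/-- `a(u) = sinh(u+η)/sinh η`. -/
def aF (u : ℂ) : ℂ := Complex.sinh (u + ηc) / Complex.sinh ηc
/-- `b(u) = sinh(u)/sinh η`. -/
def bF (u : ℂ) : ℂ := Complex.sinh u / Complex.sinh ηc
/-- `c(u) = 1`. -/
def cF (_ : ℂ) : ℂ := 1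
/-- `d(u) = sinh(u-η)/sinh η`. -/
def dF (u : ℂ) : ℂ := Complex.sinh (u - ηc) / Complex.sinh ηc
/-- The R-matrix `R(u)` on `V⊗V` in the ordered basis `(v₊⊗v₊, v₊⊗v₋, v₋⊗v₊, v₋⊗v₋)`:
`[[a,0,0,0],[0,b,c,0],[0,c,b,0],[0,0,0,a]]`. -/
def Rm (u : ℂ) : Matrix (Bool × Bool) (Bool × Bool) ℂ :=
  Matrix.of fun o i =>
    if o = i then (if o.1 = o.2 then aF u else bF u)
    else if o.1 = i.2 ∧ o.2 = i.1 ∧ o.1 ≠ o.2 then cF u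
    else 0

/-- The boundary K-matrix `K⁻(u) = diag(d(u), -a(u))` in the basis `(v₊, v₋)`. -/
def Km (u : ℂ) : Matrix Bool Bool ℂ :=
  Matrix.of fun o i => if o = i then (if o then dF u else -aF u) else 0

/-- `R₀ᵢ(u)`: the matrix `R(u)` applied to `V₀ ⊗ Vᵢ` (auxiliary space first), identity
elsewhere, on `V₀ ⊗ V^⊗N`; here the site with label `i` is the index `i-1`. -/
def R0i (N : ℕ) (u : ℂ) (i : Fin N) :
    Matrix (Bool × Conf N) (Bool × Conf N) ℂ :=
  Matrix.of fun x y =>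
    if ∀ j, j ≠ i → x.2 j = y.2 j then Rm u (x.1, x.2 i) (y.1, y.2 i) else 0

/-- `Rᵢ₀(u)`: the matrix `R(u)` applied to `Vᵢ ⊗ V₀` (auxiliary space second), identity
elsewhere, on `V₀ ⊗ V^⊗N`. -/
def Ri0 (N : ℕ) (u : ℂ) (i : Fin N) :
    Matrix (Bool × Conf N) (Bool × Conf N) ℂ :=
  Matrix.of fun x y =>
    if ∀ j, j ≠ i → x.2 j = y.2 j then Rm u (x.2 i, x.1) (y.2 i, y.1) else 0

/-- `T^(N)(u) = R₀₁(u) R₀₂(u) ⋯ R₀N(u)`. -/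
def Tmono (N : ℕ) (u : ℂ) : Matrix (Bool × Conf N) (Bool × Conf N) ℂ :=
  (List.ofFn fun i : Fin N => R0i N u i).prod

/-- `T̄^(N)(u) = R_{N0}(u) ⋯ R_{20}(u) R_{10}(u)`. -/
def Tbar (N : ℕ) (u : ℂ) : Matrix (Bool × Conf N) (Bool × Conf N) ℂ :=
  (List.ofFn fun i : Fin N => Ri0 N u i).reverse.prod

/-- `K₀⁻(u)`: the matrix `K⁻(u)` acting on the auxiliary space `V₀`, identity on `V^⊗N`. -/
def K0m (N : ℕ) (u : ℂ) : Matrix (Bool × Conf N) (Bool × Conf N) ℂ :=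
  Matrix.of fun x y => if x.2 = y.2 then Km u x.1 y.1 else 0

/-- The double-row monodromy matrix `U^(N)(u) = T̄^(N)(u) K₀⁻(u) T^(N)(u)`. -/
def Umono (N : ℕ) (u : ℂ) : Matrix (Bool × Conf N) (Bool × Conf N) ℂ :=
  Tbar N u * K0m N u * Tmono N u

/-- `𝒜^(N)(u)`: the `(v₊, v₊)` auxiliary-space block of `U^(N)(u)`. -/
def Aop (N : ℕ) (u : ℂ) : Matrix (Conf N) (Conf N) ℂ :=
  Matrix.of fun s t => Umono N u (true, s) (true, t)
/-- `ℬ^(N)(u)`: the `(v₊, v₋)` auxiliary-space block of `U^(N)(u)`. -/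
def Bop (N : ℕ) (u : ℂ) : Matrix (Conf N) (Conf N) ℂ :=
  Matrix.of fun s t => Umono N u (true, s) (false, t)
/-- `𝒞^(N)(u)`: the `(v₋, v₊)` auxiliary-space block of `U^(N)(u)`. -/
def Cop (N : ℕ) (u : ℂ) : Matrix (Conf N) (Conf N) ℂ :=
  Matrix.of fun s t => Umono N u (false, s) (true, t)
/-- `𝒟^(N)(u)`: the `(v₋, v₋)` auxiliary-space block of `U^(N)(u)`. -/
def Dop (N : ℕ) (u : ℂ) : Matrix (Conf N) (Conf N) ℂ :=
  Matrix.of fun s t => Umono N u (false, s) (false, t)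

/-- The transfer matrix
`t^(N)(u) = (sinh u / sinh η) 𝒜^(N)(u) - (sinh(u+2η)/sinh η) 𝒟^(N)(u)`. -/
def tOp (N : ℕ) (u : ℂ) : Matrix (Conf N) (Conf N) ℂ :=
  (Complex.sinh u / Complex.sinh ηc) • Aop N u
    - (Complex.sinh (u + 2 * ηc) / Complex.sinh ηc) • Dop N u

/-- The pseudovacuum `Ω^(N) = v₊ ⊗ ⋯ ⊗ v₊`. -/
def Omega (N : ℕ) : Conf N → ℂ := fun s => if ∀ j, s j = true then 1 else 0

/-- `E^ε ⊗ X : V^⊗(n+2) → V^⊗(n+1)`: the linear functional `E^ε : V → ℂ`, `v_ε ↦ 1`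
(zero on the other basis vector), applied to the leftmost site `N = n+2`, tensored with
the operator `X` on the remaining sites `n+1,…,1`.  Here `e = true` encodes `ε = +`. -/
def Etens (n : ℕ) (e : Bool) (X : Matrix (Conf (n + 1)) (Conf (n + 1)) ℂ) :
    Matrix (Conf (n + 1)) (Conf (n + 2)) ℂ :=
  Matrix.of fun o i =>
    (if i (Fin.last (n + 1)) = e then 1 else 0) * X o (fun j => i (Fin.castSucc j))

/-- `F ⊗ X` : the one-site operator `F` applied to the leftmost site `N+1` of a chain of
`N+1` sites, tensored with the operator `X` on the remaining sites `N,…,1`. -/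
def siteTens (N : ℕ) (F : Matrix Bool Bool ℂ) (X : Matrix (Conf N) (Conf N) ℂ) :
    Matrix (Conf (N + 1)) (Conf (N + 1)) ℂ :=
  Matrix.of fun o i =>
    F (o (Fin.last N)) (i (Fin.last N)) * X (fun j => o (Fin.castSucc j)) (fun j => i (Fin.castSucc j))

/-- `E^ε_{ε'} : V → V` sends `v_ε ↦ v_{ε'}` and the other basis vector to `0`
(`true` encodes `+`). -/
def Eop (e e' : Bool) : Matrix Bool Bool ℂ :=
  Matrix.of fun o i => if i = e ∧ o = e' then 1 else 0
namespace ARec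

/-- Extension of a size-N operator to size N+1, acting as identity on the new last site. -/
def ext (N : ℕ) (M : Matrix (Bool × Conf N) (Bool × Conf N) ℂ) :
    Matrix (Bool × Conf (N + 1)) (Bool × Conf (N + 1)) ℂ :=
  Matrix.of fun x y =>
    (if x.2 (Fin.last N) = y.2 (Fin.last N) then 1 else 0) *
      M (x.1, fun j => x.2 j.castSucc) (y.1, fun j => y.2 j.castSucc)

lemma sum_conf {N : ℕ} (f : Conf (N + 1) → ℂ) :
    ∑ s, f s = ∑ p : Bool, ∑ t : Conf N, f (Fin.snoc t p) := by
  rw [← Equiv.sum_comp (Fin.snocEquiv (fun _ => Bool)) f, Fintype.sum_prod_type]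
  rfl

lemma forall_split {N : ℕ} (Q : Fin (N + 1) → Prop) :
    (∀ j, Q j) ↔ Q (Fin.last N) ∧ ∀ k : Fin N, Q k.castSucc := by
  constructor
  · exact fun h => ⟨h _, fun k => h _⟩
  · rintro ⟨h1, h2⟩ j
    exact Fin.lastCases h1 h2 j

lemma forall_ne_last {N : ℕ} (Q : Fin (N + 1) → Prop) :
    (∀ j, j ≠ Fin.last N → Q j) ↔ ∀ k : Fin N, Q k.castSucc := by
  constructor
  · exact fun h k => h _ (Fin.castSucc_lt_last k).ne
  · intro h j hj
    rcases Fin.exists_castSucc_eq.2 hj with ⟨k, rfl⟩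
    exact h k

lemma forall_ne_castSucc {N : ℕ} (i : Fin N) (Q : Fin (N + 1) → Prop) :
    (∀ j, j ≠ Fin.castSucc i → Q j) ↔
      Q (Fin.last N) ∧ ∀ k : Fin N, k ≠ i → Q k.castSucc := by
  constructor
  · exact fun h => ⟨h _ (Fin.castSucc_lt_last i).ne', fun k hk =>
      h _ (fun hc => hk (Fin.castSucc_injective N hc))⟩
  · rintro ⟨h1, h2⟩ j hj
    by_cases hl : j = Fin.last N
    · subst hl; exact h1
    · rcases Fin.exists_castSucc_eq.2 hl with ⟨k, rfl⟩
      exact h2 k fun hk => hj (by rw [hk])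
  

lemma ext_apply_snoc {N : ℕ} (M : Matrix (Bool × Conf N) (Bool × Conf N) ℂ)
    (α β p q : Bool) (s t : Conf N) :
    ext N M (α, Fin.snoc s p) (β, Fin.snoc t q)
      = (if p = q then 1 else 0) * M (α, s) (β, t) := by
  simp [ext, Fin.snoc_last, Fin.snoc_castSucc]

lemma ext_one {N : ℕ} : ext N (1 : Matrix (Bool × Conf N) (Bool × Conf N) ℂ) = 1 := by
  ext x y
  simp only [ext, Matrix.of_apply, Matrix.one_apply, Prod.mk.injEq, Prod.ext_iff, funext_iff]
  simp only [forall_split fun j => x.2 j = y.2 j]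
  by_cases h1 : x.2 (Fin.last N) = y.2 (Fin.last N) <;>
    by_cases h2 : x.1 = y.1 <;>
    by_cases h3 : ∀ k : Fin N, x.2 k.castSucc = y.2 k.castSucc <;>
    simp [h1, h2, h3]

lemma ext_mul {N : ℕ} (M M' : Matrix (Bool × Conf N) (Bool × Conf N) ℂ) :
    ext N (M * M') = ext N M * ext N M' := by
  ext x y
  rw [Matrix.mul_apply, Fintype.sum_prod_type]
  have : ∀ β : Bool, ∑ w : Conf (N + 1), ext N M x (β, w) * ext N M' (β, w) y
      = (if x.2 (Fin.last N) = y.2 (Fin.last N) then 1 else 0) *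
        ∑ t : Conf N, M (x.1, fun j => x.2 j.castSucc) (β, t) *
          M' (β, t) (y.1, fun j => y.2 j.castSucc) := by
    intro β
    rw [sum_conf fun w => ext N M x (β, w) * ext N M' (β, w) y]
    simp only [ext, Matrix.of_apply, Fin.snoc_last, Fin.snoc_castSucc]
    rw [Fintype.sum_bool]
    by_cases h1 : x.2 (Fin.last N) = y.2 (Fin.last N) <;>
      by_cases h2 : x.2 (Fin.last N) = true <;>
      cases hy : y.2 (Fin.last N) <;>
      simp_all [Finset.mul_sum, mul_comm, mul_left_comm]
  rw [Finset.sum_congr rfl fun β _ => this β]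
  rw [ext]
  simp only [Matrix.of_apply, Matrix.mul_apply, Fintype.sum_prod_type]
  rw [Finset.mul_sum]


lemma R0i_castSucc {N : ℕ} (u : ℂ) (i : Fin N) :
    R0i (N + 1) u i.castSucc = ext N (R0i N u i) := by
  ext x y
  simp only [R0i, ext, Matrix.of_apply]
  simp only [show (∀ j, j ≠ Fin.castSucc i → x.2 j = y.2 j) ↔
      (x.2 (Fin.last N) = y.2 (Fin.last N) ∧
        ∀ k : Fin N, k ≠ i → x.2 k.castSucc = y.2 k.castSucc) from
    forall_ne_castSucc i fun j => x.2 j = y.2 j]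
  by_cases h1 : x.2 (Fin.last N) = y.2 (Fin.last N) <;>
    by_cases h2 : ∀ k : Fin N, k ≠ i → x.2 k.castSucc = y.2 k.castSucc <;>
    simp [h1, h2]

lemma Ri0_castSucc {N : ℕ} (u : ℂ) (i : Fin N) :
    Ri0 (N + 1) u i.castSucc = ext N (Ri0 N u i) := by
  ext x y
  simp only [Ri0, ext, Matrix.of_apply]
  simp only [show (∀ j, j ≠ Fin.castSucc i → x.2 j = y.2 j) ↔
      (x.2 (Fin.last N) = y.2 (Fin.last N) ∧
        ∀ k : Fin N, k ≠ i → x.2 k.castSucc = y.2 k.castSucc) from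
    forall_ne_castSucc i fun j => x.2 j = y.2 j]
  by_cases h1 : x.2 (Fin.last N) = y.2 (Fin.last N) <;>
    by_cases h2 : ∀ k : Fin N, k ≠ i → x.2 k.castSucc = y.2 k.castSucc <;>
    simp [h1, h2]

lemma K0m_succ {N : ℕ} (u : ℂ) : K0m (N + 1) u = ext N (K0m N u) := by
  ext x y
  simp only [K0m, ext, Matrix.of_apply, funext_iff]
  simp only [show (∀ j, x.2 j = y.2 j) ↔
      (x.2 (Fin.last N) = y.2 (Fin.last N) ∧
        ∀ k : Fin N, x.2 k.castSucc = y.2 k.castSucc) from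
    forall_split fun j => x.2 j = y.2 j]
  by_cases h1 : x.2 (Fin.last N) = y.2 (Fin.last N) <;>
    by_cases h2 : ∀ k : Fin N, x.2 k.castSucc = y.2 k.castSucc <;>
    simp [h1, h2]

lemma ext_list_prod {N : ℕ} (l : List (Matrix (Bool × Conf N) (Bool × Conf N) ℂ)) :
    ext N l.prod = (l.map (ext N)).prod := by
  induction l with
  | nil => simpa using ext_one
  | cons a l ih => simp [ext_mul, ih]

lemma Tmono_succ {N : ℕ} (u : ℂ) :
    Tmono (N + 1) u = ext N (Tmono N u) * R0i (N + 1) u (Fin.last N) := by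
  unfold Tmono
  rw [List.ofFn_succ', List.prod_concat]
  congr 1
  rw [ext_list_prod, List.map_ofFn]
  exact congrArg List.prod (congrArg List.ofFn (funext fun i => R0i_castSucc u i))

lemma Tbar_succ {N : ℕ} (u : ℂ) :
    Tbar (N + 1) u = Ri0 (N + 1) u (Fin.last N) * ext N (Tbar N u) := by
  unfold Tbar
  rw [List.ofFn_succ', List.concat_eq_append, List.reverse_append, List.reverse_cons, List.reverse_nil, List.nil_append, List.singleton_append, List.prod_cons]
  congr 1
  rw [ext_list_prod, List.map_reverse, List.map_ofFn]
  congr 3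
  funext i
  exact Ri0_castSucc u i

lemma Umono_succ {N : ℕ} (u : ℂ) :
    Umono (N + 1) u
      = Ri0 (N + 1) u (Fin.last N) * ext N (Umono N u) * R0i (N + 1) u (Fin.last N) := by
  unfold Umono
  rw [Tbar_succ, K0m_succ, Tmono_succ, ext_mul, ext_mul]
  simp only [Matrix.mul_assoc]


lemma sum_collapse {N : ℕ} (c : Conf N) (f : Conf N → ℂ) :
    ∑ t : Conf N, (if ∀ k, c k = t k then f t else 0) = f c := by
  have h : ∀ t : Conf N, (if ∀ k, c k = t k then f t else 0) = if c = t then f t else 0 := by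
    intro t; simp [funext_iff]
  simp only [h]
  simp

lemma Ri0_last_mul {N : ℕ} (u : ℂ)
    (M : Matrix (Bool × Conf (N + 1)) (Bool × Conf (N + 1)) ℂ)
    (x z : Bool × Conf (N + 1)) :
    (Ri0 (N + 1) u (Fin.last N) * M) x z
      = ∑ α : Bool, ∑ p : Bool,
          Rm u (x.2 (Fin.last N), x.1) (p, α) *
            M (α, Fin.snoc (fun j => x.2 j.castSucc) p) z := by
  rw [Matrix.mul_apply, Fintype.sum_prod_type]
  refine Finset.sum_congr rfl fun α _ => ?_
  rw [sum_conf fun w => Ri0 (N + 1) u (Fin.last N) x (α, w) * M (α, w) z]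
  refine Finset.sum_congr rfl fun p _ => ?_
  have h : ∀ t : Conf N,
      Ri0 (N + 1) u (Fin.last N) x (α, Fin.snoc t p) * M (α, Fin.snoc t p) z
      = if ∀ k, x.2 k.castSucc = t k then
          Rm u (x.2 (Fin.last N), x.1) (p, α) * M (α, Fin.snoc t p) z else 0 := by
    intro t
    simp only [Ri0, Matrix.of_apply]
    simp only [show (∀ j, j ≠ Fin.last N → x.2 j = (Fin.snoc t p : Conf (N + 1)) j)
        ↔ (∀ k : Fin N, x.2 k.castSucc = t k) by
      rw [forall_ne_last (fun j => x.2 j = (Fin.snoc t p : Conf (N + 1)) j)]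
      simp [Fin.snoc_castSucc]]
    by_cases hc : ∀ k : Fin N, x.2 k.castSucc = t k <;> simp [hc, Fin.snoc_last]
  simp only [h]
  exact sum_collapse _ _

lemma mul_R0i_last {N : ℕ} (u : ℂ)
    (M : Matrix (Bool × Conf (N + 1)) (Bool × Conf (N + 1)) ℂ)
    (x z : Bool × Conf (N + 1)) :
    (M * R0i (N + 1) u (Fin.last N)) x z
      = ∑ β : Bool, ∑ q : Bool,
          M x (β, Fin.snoc (fun j => z.2 j.castSucc) q) *
            Rm u (β, q) (z.1, z.2 (Fin.last N)) := by
  rw [Matrix.mul_apply, Fintype.sum_prod_type]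
  refine Finset.sum_congr rfl fun β _ => ?_
  rw [sum_conf fun w => M x (β, w) * R0i (N + 1) u (Fin.last N) (β, w) z]
  refine Finset.sum_congr rfl fun q _ => ?_
  have h : ∀ t : Conf N,
      M x (β, Fin.snoc t q) * R0i (N + 1) u (Fin.last N) (β, Fin.snoc t q) z
      = if ∀ k, z.2 k.castSucc = t k then
          M x (β, Fin.snoc t q) * Rm u (β, q) (z.1, z.2 (Fin.last N)) else 0 := by
    intro t
    simp only [R0i, Matrix.of_apply]
    simp only [show (∀ j, j ≠ Fin.last N → (Fin.snoc t q : Conf (N + 1)) j = z.2 j)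
        ↔ (∀ k : Fin N, z.2 k.castSucc = t k) by
      rw [forall_ne_last (fun j => (Fin.snoc t q : Conf (N + 1)) j = z.2 j)]
      simp [Fin.snoc_castSucc, eq_comm]]
    by_cases hc : ∀ k : Fin N, z.2 k.castSucc = t k <;> simp [hc, Fin.snoc_last]
  simp only [h]
  exact sum_collapse _ _

end ARec

/-- recursion for 𝒜: for every `N ≥ 1` and every `u ∈ ℂ`,
`𝒜^(N+1)(u) = a² E⁺₊ ⊗ 𝒜^(N) + b² E⁻₋ ⊗ 𝒜^(N) + ac E⁻₊ ⊗ ℬ^(N) + ac E⁺₋ ⊗ 𝒞^(N)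
  + c² E⁻₋ ⊗ 𝒟^(N)`, the first factor acting on the new (leftmost) site `N+1`. -/
theorem A_recursion (N : ℕ) (hN : 1 ≤ N) (u : ℂ) :
    Aop (N + 1) u
      = aF u ^ 2 • siteTens N (Eop true true) (Aop N u)
        + bF u ^ 2 • siteTens N (Eop false false) (Aop N u)
        + (aF u * cF u) • siteTens N (Eop false true) (Bop N u)
        + (aF u * cF u) • siteTens N (Eop true false) (Cop N u)
        + cF u ^ 2 • siteTens N (Eop false false) (Dop N u) := by
  ext s t
  show Umono (N + 1) u (true, s) (true, t) = _
  rw [ARec.Umono_succ u, ARec.mul_R0i_last]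
  simp only [ARec.Ri0_last_mul, ARec.ext_apply_snoc, Fintype.sum_bool, Finset.sum_mul,
    Finset.mul_sum]
  simp only [Matrix.add_apply, Matrix.smul_apply, siteTens, Eop, Aop, Bop, Cop, Dop,
    Matrix.of_apply, smul_eq_mul]
  cases hs : s (Fin.last N) <;> cases ht : t (Fin.last N) <;>
    simp [Rm, aF, bF, cF, hs, ht] <;> ring
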